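/- For all s ∈ ℝ one has g_ε(β′(s), β′(s)) = ⟨β′(s), β′(s)⟩ − (1+ε²)⟨β′(s), J₁β(s)⟩² = −ε²/B, the Berger metric being taken at the point β(s). In particular g_ε(β′(s), β′(s)) > 0 when λ = −1 (β is spacelike) and g_ε(β′(s), β′(s)) < 0 when λ = 1 (β is timelike). -/

import Mathlib

open Matrix Real

noncomputable def J1 : Matrix (Fin 4) (Fin 4) ℝ :=
  !![0,-1,0,0; 1,0,0,0; 0,0,0,-1; 0,0,1,0]

/-- along the curve `β`, the Berger metric (taken at the point
`β(s)`) satisfies `g_ε(β′,β′) = ⟨β′,β′⟩ − (1+ε²)⟨β′, J₁β⟩² = −ε²/B`; in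
particular `β` is spacelike when `λ = −1` and timelike when `λ = 1`. -/
theorem stmt16 (ε lam ν B d : ℝ) (hε : 0 < ε)
    (hcase : (lam = -1 ∧ 1 < ν ^ 2) ∨ (lam = 1 ∧ ν ≠ 0))
    (hB : B = 1 + lam * ν ^ 2 * (1 + ε ^ 2))
    (hd : d = (Real.sqrt (lam * B) - ε * |ν|) / Real.sqrt (lam + ν ^ 2))
    (β : ℝ → Fin 4 → ℝ)
    (hβ : ∀ s, β s = (1 / Real.sqrt (1 + d ^ 2)) •
      ![d * cos (s / d), lam * d * sin (s / d), cos (d * s), lam * sin (d * s)]) :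
    ∀ s : ℝ,
      deriv β s ⬝ᵥ deriv β s
        - (1 + ε ^ 2) * (deriv β s ⬝ᵥ (J1 *ᵥ β s)) ^ 2 = -ε ^ 2 / B ∧
      (lam = -1 → 0 < -ε ^ 2 / B) ∧
      (lam = 1 → -ε ^ 2 / B < 0) := by
  have hlam : lam = -1 ∨ lam = 1 := by
    rcases hcase with ⟨h, _⟩ | ⟨h, _⟩
    · exact Or.inl h
    · exact Or.inr h
  have hlam2 : lam ^ 2 = 1 := by rcases hlam with h | h <;> rw [h] <;> norm_num
  have hlamne : lam ≠ 0 := by rcases hlam with h | h <;> rw [h] <;> norm_num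
  set D := lam + ν ^ 2 with hD
  have hDpos : 0 < D := by
    rcases hcase with ⟨h, h2⟩ | ⟨h, h2⟩
    · rw [hD, h]; linarith
    · rw [hD, h]; nlinarith [sq_nonneg ν]
  have hlB : lam * B = D + ε ^ 2 * ν ^ 2 := by
    rw [hB, hD]; linear_combination (ν ^ 2 * (1 + ε ^ 2)) * hlam2
  have hlBpos : 0 < lam * B := by nlinarith [sq_nonneg (ε * ν)]
  have hBne : B ≠ 0 := by
    intro h; rw [h, mul_zero] at hlBpos; exact lt_irrefl 0 hlBpos
  set a := Real.sqrt (lam * B) with ha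
  set b := ε * |ν| with hbdef
  set k := Real.sqrt D with hk
  have ha2 : a ^ 2 = lam * B := Real.sq_sqrt hlBpos.le
  have hb2 : b ^ 2 = ε ^ 2 * ν ^ 2 := by rw [hbdef, mul_pow, sq_abs]
  have hb0 : 0 ≤ b := mul_nonneg hε.le (abs_nonneg _)
  have hk2 : k ^ 2 = D := Real.sq_sqrt hDpos.le
  have hkpos : 0 < k := Real.sqrt_pos.2 hDpos
  have hD2 : a ^ 2 - b ^ 2 = D := by rw [ha2, hb2, hlB]; ring
  have hba : b < a := by
    have hlt : b ^ 2 < a ^ 2 := by rw [ha2, hb2, hlB]; linarith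
    exact lt_of_pow_lt_pow_left₀ 2 (Real.sqrt_nonneg _) hlt
  have hdpos : 0 < d := by rw [hd]; exact div_pos (by linarith) hkpos
  have hdne : d ≠ 0 := hdpos.ne'
  have h1dpos : (0:ℝ) < 1 + d ^ 2 := by positivity
  -- algebra
  have hd2' : d ^ 2 = (a - b) ^ 2 / D := by rw [hd, div_pow, hk2]
  have h1d' : 1 + d ^ 2 = 2 * a * (a - b) / D := by
    rw [hd2']; field_simp; linear_combination (-1) * hD2
  have hsq : (2 * lam * d / (1 + d ^ 2)) ^ 2 = D / (lam * B) := by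
    have h4 : (2 * lam * d) ^ 2 = 4 * ((a - b) ^ 2 / D) := by
      rw [← hd2']; linear_combination (4 * d ^ 2) * hlam2
    rw [div_pow, h1d', h4, ← ha2]
    have hane : a ≠ 0 := by positivity
    have habne : a - b ≠ 0 := by linarith
    field_simp
    ring
  have hfinal : 1 - (1 + ε ^ 2) * (D / (lam * B)) = -ε ^ 2 / B := by
    have hnum : lam * B - (1 + ε ^ 2) * D = -(ε ^ 2 * lam) := by rw [hlB, hD]; ring
    have hlBne : lam * B ≠ 0 := ne_of_gt hlBpos
    have e1 : 1 - (1 + ε ^ 2) * (D / (lam * B)) = -(ε ^ 2 * lam) / (lam * B) := by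
      rw [← hnum]; field_simp
    rw [e1, div_eq_div_iff hlBne hBne]
    ring
  refine fun s => ⟨?_, ?_, ?_⟩
  · set r := Real.sqrt (1 + d ^ 2) with hr
    have hrpos : 0 < r := Real.sqrt_pos.2 h1dpos
    have hrne : r ≠ 0 := hrpos.ne'
    have hr2 : r ^ 2 = 1 + d ^ 2 := Real.sq_sqrt h1dpos.le
    set V : Fin 4 → ℝ := ![1 / r * -Real.sin (s / d), 1 / r * (lam * Real.cos (s / d)),
      1 / r * -(d * Real.sin (d * s)), 1 / r * (lam * (d * Real.cos (d * s)))] with hV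
    have hβfun : β = fun t => (1 / r) • ![d * Real.cos (t / d), lam * d * Real.sin (t / d),
        Real.cos (d * t), lam * Real.sin (d * t)] := funext hβ
    have hder : HasDerivAt β V s := by
      rw [hβfun]
      refine hasDerivAt_pi.2 fun i => ?_
      have h0 : HasDerivAt (fun y : ℝ => y / d) (1 / d) s := (hasDerivAt_id s).div_const d
      have hm : HasDerivAt (fun y : ℝ => d * y) d s := by
        simpa using (hasDerivAt_id s).const_mul d
      fin_cases i <;> simp [hV]
      · have e1 : (fun x : ℝ => r⁻¹ * (d * Real.cos (x / d)))
            = fun t => r⁻¹ * d * Real.cos (t / d) := by funext t; ring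
        have e2 : -(r⁻¹ * Real.sin (s / d)) = r⁻¹ * d * (-Real.sin (s / d) * (1 / d)) := by
          field_simp
        rw [e1, e2]; exact (h0.cos).const_mul (r⁻¹ * d)
      · have e1 : (fun x : ℝ => r⁻¹ * (lam * d * Real.sin (x / d)))
            = fun t => r⁻¹ * (lam * d) * Real.sin (t / d) := by funext t; ring
        have e2 : r⁻¹ * (lam * Real.cos (s / d))
            = r⁻¹ * (lam * d) * (Real.cos (s / d) * (1 / d)) := by field_simp
        rw [e1, e2]; exact (h0.sin).const_mul (r⁻¹ * (lam * d))
      · have e2 : -(r⁻¹ * (d * Real.sin (d * s))) = r⁻¹ * (-Real.sin (d * s) * d) := by ring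
        rw [e2]; exact (hm.cos).const_mul r⁻¹
      · have e1 : (fun x : ℝ => r⁻¹ * (lam * Real.sin (d * x)))
            = fun t => r⁻¹ * lam * Real.sin (d * t) := by funext t; ring
        have e2 : r⁻¹ * (lam * (d * Real.cos (d * s)))
            = r⁻¹ * lam * (Real.cos (d * s) * d) := by ring
        rw [e1, e2]; exact (hm.sin).const_mul (r⁻¹ * lam)
    rw [hder.deriv, hβ s]
    have hpq := Real.sin_sq_add_cos_sq (s / d)
    have huv := Real.sin_sq_add_cos_sq (d * s)
    have h1 : V ⬝ᵥ V = 1 := by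
      simp only [hV, dotProduct, Fin.sum_univ_four, Matrix.cons_val_zero,
        Matrix.cons_val_one, Matrix.head_cons, Matrix.cons_val_two, Matrix.tail_cons,
        Matrix.cons_val_three]
      field_simp
      rw [mul_comm s d]
      linear_combination hpq + d ^ 2 * huv + (Real.cos (s / d) ^ 2 + d ^ 2 * Real.cos (d * s) ^ 2) * hlam2 - hr2
    have h2 : V ⬝ᵥ (J1 *ᵥ (1 / r) • ![d * Real.cos (s / d), lam * d * Real.sin (s / d),
        Real.cos (d * s), lam * Real.sin (d * s)]) = 2 * lam * d / (1 + d ^ 2) := by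
      simp only [hV, J1, dotProduct, Matrix.mulVec, Fin.sum_univ_four,
        Pi.smul_apply, smul_eq_mul, Matrix.cons_val_zero, Matrix.cons_val_one,
        Matrix.head_cons, Matrix.cons_val_two, Matrix.tail_cons, Matrix.cons_val_three,
        Matrix.cons_val', Matrix.empty_val', Matrix.cons_val_fin_one, Matrix.of_apply]
      field_simp
      simp only [Matrix.vecHead]
      rw [mul_comm s d]
      linear_combination lam * d * (1 + d ^ 2) * hpq + lam * d * (1 + d ^ 2) * huv - 2 * lam * d * hr2
    rw [h1, h2, hsq]
    exact hfinal
  · intro h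
    have hBneg : B < 0 := by rw [h] at hlBpos; linarith
    have : (0:ℝ) < ε ^ 2 := by positivity
    rw [neg_div]
    exact neg_pos.2 (div_neg_of_pos_of_neg this hBneg)
  · intro h
    have hBpos : 0 < B := by rw [h] at hlBpos; linarith
    have : (0:ℝ) < ε ^ 2 := by positivity
    rw [neg_div]
    exact neg_neg_iff_pos.2 (div_pos this hBpos)
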